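/- arXiv:2502.05300 — 3 statements merged into one kernel-verified Lean document; each statement's English description precedes it below -/
import Mathlib

section
/- Let ℓ: ℝ^d → ℝ be differentiable and G-invariant with P_G^T = P_G. If the initialization θ₀ satisfies P_G θ₀ = θ₀, then the entire gradient descent trajectory θ_{t+1} = θ_t − η ∇ℓ(θ_t) satisfies P_G θ_t = θ_t for all t ∈ ℕ. -/
open RealInnerProductSpace

/-- The whole gradient-descent trajectory started at a G-symmetric point of a
G-invariant differentiable loss stays G-symmetric. -/
theorem gradientDescent_trajectory_preserves_symmetry {G : Type*} [Group G] [Fintype G] {d : ℕ}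
    (ρ : Representation ℝ G (EuclideanSpace ℝ (Fin d)))
    (ℓ : EuclideanSpace ℝ (Fin d) → ℝ) (hℓ : Differentiable ℝ ℓ)
    (hinv : ∀ (g : G) (θ : EuclideanSpace ℝ (Fin d)), ℓ (ρ g θ) = ℓ θ)
    (P : EuclideanSpace ℝ (Fin d) →ₗ[ℝ] EuclideanSpace ℝ (Fin d))
    (hP : ∀ θ, P θ = ((Fintype.card G : ℝ))⁻¹ • ∑ g : G, ρ g θ)
    (hPsym : ∀ θ η' : EuclideanSpace ℝ (Fin d), ⟪P θ, η'⟫ = ⟪θ, P η'⟫)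
    (η : ℝ) (θ : ℕ → EuclideanSpace ℝ (Fin d)) (hθ₀ : P (θ 0) = θ 0)
    (hstep : ∀ t : ℕ, θ (t + 1) = θ t - η • gradient ℓ (θ t)) :
    ∀ t : ℕ, P (θ t) = θ t := by
  -- fixed points of P are fixed by every ρ g
  have hfix : ∀ (x : EuclideanSpace ℝ (Fin d)), P x = x → ∀ g : G, ρ g x = x := by
    intro x hx g
    have h1 : ρ g (P x) = P x := by
      rw [hP, map_smul, map_sum]
      congr 1
      rw [← Fintype.sum_equiv (Equiv.mulLeft g) _ (fun h => ρ h x)]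
      intro h
      simp only [Equiv.coe_mulLeft]
      rw [map_mul]; rfl
    rw [hx] at h1
    exact h1
  -- gradient at a fixed point is fixed by P
  have hgrad : ∀ (x : EuclideanSpace ℝ (Fin d)), P x = x → P (gradient ℓ x) = gradient ℓ x := by
    intro x hx
    have hderiv : ∀ g : G, ∀ v, fderiv ℝ ℓ x (ρ g v) = fderiv ℝ ℓ x v := by
      intro g v
      have hL : (fun y => ℓ ((ρ g).toContinuousLinearMap y)) = ℓ := by
        funext y; exact hinv g y
      have hcomp : fderiv ℝ (fun y => ℓ ((ρ g).toContinuousLinearMap y)) x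
          = (fderiv ℝ ℓ ((ρ g).toContinuousLinearMap x)).comp (ρ g).toContinuousLinearMap := by
        exact (hℓ _).hasFDerivAt.comp x ((ρ g).toContinuousLinearMap.hasFDerivAt) |>.fderiv
      have hx' : (ρ g).toContinuousLinearMap x = x := hfix x hx g
      rw [hL, hx'] at hcomp
      nth_rewrite 2 [hcomp]
      rfl
    have key : ∀ v, ⟪gradient ℓ x, P v⟫ = ⟪gradient ℓ x, v⟫ := by
      intro v
      have hg : ∀ v, ⟪gradient ℓ x, v⟫ = fderiv ℝ ℓ x v := by
        intro v
        rw [gradient, ← InnerProductSpace.toDual_apply_apply (𝕜 := ℝ), LinearIsometryEquiv.apply_symm_apply]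
      rw [hg, hg, hP]
      simp only [map_smul, map_sum]
      simp only [hderiv]
      rw [Finset.sum_const, smul_eq_mul]
      simp [Finset.card_univ, mul_comm]
    apply ext_inner_right ℝ
    intro v
    rw [hPsym, key]
  intro t
  induction t with
  | zero => exact hθ₀
  | succ n ih =>
    rw [hstep n, map_sub, map_smul, ih, hgrad _ ih]
end

section
/- Let ℓ₀: ℝ^d × ℝ^d → ℝ be differentiable with swap symmetry ℓ₀(u, w) = ℓ₀(w, u), and suppose there exist K > 0 and q ≥ 1 such that for all v, θ, |d/dz ℓ₀(v + zθ, v − zθ)| ≤ K ‖zθ‖^q ‖θ‖ (equivalently, ‖∇ℓ₀ along the antisymmetric direction‖ ≤ K‖zθ‖^q). Define ℓ(u,w) = ℓ₀(u,w) + γ(‖u‖² + ‖w‖²) with γ > 0. If (θ₁, θ₂) is a global minimum of ℓ, then −K‖θ₁−θ₂‖^{q+1} + (γ/2)‖θ₁−θ₂‖² ≤ 0. -/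
/-- Midpoint comparison at a global minimum of a swap-symmetric loss with weight decay:
`−K‖θ₁−θ₂‖^{q+1} + (γ/2)‖θ₁−θ₂‖² ≤ 0`. -/
theorem spaceQuantization_midpoint_inequality {d : ℕ}
    (ℓ₀ : EuclideanSpace ℝ (Fin d) → EuclideanSpace ℝ (Fin d) → ℝ)
    (hdiff : Differentiable ℝ (fun p : EuclideanSpace ℝ (Fin d) × EuclideanSpace ℝ (Fin d) =>
      ℓ₀ p.1 p.2))
    (hsym : ∀ u w, ℓ₀ u w = ℓ₀ w u)
    (K q : ℝ) (hK : 0 < K) (hq : 1 ≤ q)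
    (hgrad : ∀ (v θ : EuclideanSpace ℝ (Fin d)) (z : ℝ),
      |deriv (fun s : ℝ => ℓ₀ (v + s • θ) (v - s • θ)) z| ≤ K * ‖z • θ‖ ^ q * ‖θ‖)
    (γ : ℝ) (hγ : 0 < γ)
    (ℓ : EuclideanSpace ℝ (Fin d) → EuclideanSpace ℝ (Fin d) → ℝ)
    (hℓ : ∀ u w, ℓ u w = ℓ₀ u w + γ * (‖u‖ ^ 2 + ‖w‖ ^ 2))
    (θ₁ θ₂ : EuclideanSpace ℝ (Fin d)) (hmin : ∀ u w, ℓ θ₁ θ₂ ≤ ℓ u w) :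
    -K * ‖θ₁ - θ₂‖ ^ (q + 1) + (γ / 2) * ‖θ₁ - θ₂‖ ^ 2 ≤ 0 := by
  set m : EuclideanSpace ℝ (Fin d) := (1/2 : ℝ) • (θ₁ + θ₂) with hm
  set θ : EuclideanSpace ℝ (Fin d) := (1/2 : ℝ) • (θ₁ - θ₂) with hθ
  have hD : (0:ℝ) ≤ ‖θ₁ - θ₂‖ := norm_nonneg _
  by_cases hzero : θ₁ = θ₂
  · simp [hzero, Real.zero_rpow (by linarith : q + 1 ≠ 0)]
  have hDpos : (0:ℝ) < ‖θ₁ - θ₂‖ := by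
    simpa [sub_eq_zero] using (norm_pos_iff.mpr (sub_ne_zero.mpr hzero))
  -- norm identity
  have hnθ : ‖θ‖ = ‖θ₁ - θ₂‖ / 2 := by
    rw [hθ, norm_smul]; simp [abs_of_nonneg]; ring
  have hnm : ‖m‖ = ‖θ₁ + θ₂‖ / 2 := by
    rw [hm, norm_smul]; simp [abs_of_nonneg]; ring
  have hpar : ‖θ₁ + θ₂‖ ^ 2 + ‖θ₁ - θ₂‖ ^ 2 = 2 * ‖θ₁‖ ^ 2 + 2 * ‖θ₂‖ ^ 2 := by
    have h1 := @norm_add_sq_real (EuclideanSpace ℝ (Fin d)) _ _ θ₁ θ₂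
    have h2 := @norm_sub_sq_real (EuclideanSpace ℝ (Fin d)) _ _ θ₁ θ₂
    linarith
  -- f and its bound
  set f : ℝ → ℝ := fun s => ℓ₀ (m + s • θ) (m - s • θ) with hf
  have hfd : Differentiable ℝ f := by
    have : Differentiable ℝ (fun s : ℝ => ((m + s • θ, m - s • θ) :
        EuclideanSpace ℝ (Fin d) × EuclideanSpace ℝ (Fin d))) := by fun_prop
    exact hdiff.comp this
  have hC : ∀ x ∈ Set.Ico (0:ℝ) 1, ‖deriv f x‖ ≤ K * ‖θ‖ ^ q * ‖θ‖ := by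
    intro x hx
    have h1 := hgrad m θ x
    have h2 : ‖x • θ‖ ^ q ≤ ‖θ‖ ^ q := by
      apply Real.rpow_le_rpow (norm_nonneg _) _ (by linarith)
      rw [norm_smul]
      calc |x| * ‖θ‖ ≤ 1 * ‖θ‖ := by
              apply mul_le_mul_of_nonneg_right _ (norm_nonneg _)
              rw [abs_le]; exact ⟨by linarith [hx.1], hx.2.le⟩
        _ = ‖θ‖ := one_mul _
    have h3 : K * ‖x • θ‖ ^ q * ‖θ‖ ≤ K * ‖θ‖ ^ q * ‖θ‖ := by
      apply mul_le_mul_of_nonneg_right _ (norm_nonneg _)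
      exact mul_le_mul_of_nonneg_left h2 hK.le
    calc ‖deriv f x‖ = |deriv f x| := rfl
      _ ≤ K * ‖x • θ‖ ^ q * ‖θ‖ := h1
      _ ≤ K * ‖θ‖ ^ q * ‖θ‖ := h3
  have hmvt : ‖f 1 - f 0‖ ≤ K * ‖θ‖ ^ q * ‖θ‖ := by
    have := norm_image_sub_le_of_norm_deriv_le_segment'
      (f := f) (f' := deriv f) (C := K * ‖θ‖ ^ q * ‖θ‖)
      (fun x hx => (hfd x).hasDerivAt.hasDerivWithinAt) hC 1 (Set.right_mem_Icc.mpr zero_le_one)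
    simpa using this
  have hf1 : f 1 = ℓ₀ θ₁ θ₂ := by
    have e1 : m + (1:ℝ) • θ = θ₁ := by
      rw [hm, hθ, one_smul, ← smul_add]; module
    have e2 : m - (1:ℝ) • θ = θ₂ := by
      rw [hm, hθ, one_smul]; module
    simp only [hf, e1, e2]
  have hf0 : f 0 = ℓ₀ m m := by simp [hf]
  -- global min comparison
  have hcmp : ℓ₀ θ₁ θ₂ + γ * (‖θ₁‖ ^ 2 + ‖θ₂‖ ^ 2) ≤ ℓ₀ m m + γ * (‖m‖ ^ 2 + ‖m‖ ^ 2) := by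
    have := hmin m m
    rwa [hℓ, hℓ] at this
  have hms : ‖m‖ ^ 2 + ‖m‖ ^ 2 = ‖θ₁‖ ^ 2 + ‖θ₂‖ ^ 2 - (1/2) * ‖θ₁ - θ₂‖ ^ 2 := by
    rw [hnm]; nlinarith [hpar]
  have hkey : (γ / 2) * ‖θ₁ - θ₂‖ ^ 2 ≤ K * ‖θ‖ ^ q * ‖θ‖ := by
    have h4 : ℓ₀ m m - ℓ₀ θ₁ θ₂ ≤ K * ‖θ‖ ^ q * ‖θ‖ := by
      have : |f 1 - f 0| ≤ K * ‖θ‖ ^ q * ‖θ‖ := hmvt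
      rw [hf1, hf0] at this
      cases abs_le.mp this with
      | intro hl hr => linarith
    have h5 : γ * (‖m‖ ^ 2 + ‖m‖ ^ 2) = γ * (‖θ₁‖ ^ 2 + ‖θ₂‖ ^ 2) - (γ / 2) * ‖θ₁ - θ₂‖ ^ 2 := by
      rw [hms]; ring
    linarith [hcmp, h4, h5]
  -- relate to rpow of ‖θ₁ - θ₂‖
  have hθpos : (0:ℝ) < ‖θ‖ := by rw [hnθ]; linarith
  have hrw : K * ‖θ‖ ^ q * ‖θ‖ = K * ‖θ‖ ^ (q + 1) := by
    rw [Real.rpow_add hθpos, Real.rpow_one]; ring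
  have hle : ‖θ‖ ^ (q + 1) ≤ ‖θ₁ - θ₂‖ ^ (q + 1) := by
    apply Real.rpow_le_rpow (norm_nonneg _) _ (by linarith)
    rw [hnθ]; linarith
  have : (γ / 2) * ‖θ₁ - θ₂‖ ^ 2 ≤ K * ‖θ₁ - θ₂‖ ^ (q + 1) := by
    calc (γ / 2) * ‖θ₁ - θ₂‖ ^ 2 ≤ K * ‖θ‖ ^ (q + 1) := by rw [← hrw]; exact hkey
      _ ≤ K * ‖θ₁ - θ₂‖ ^ (q + 1) := mul_le_mul_of_nonneg_left hle hK.le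
  linarith
end

section
/- Under the hypotheses of the previous statement with q > 1: if (θ₁, θ₂) is a global minimum of ℓ(u,w) = ℓ₀(u,w) + γ(‖u‖²+‖w‖²) and θ₁ ≠ θ₂, then ‖θ₁ − θ₂‖ ≥ (γ/(2K))^{1/(q−1)}. -/
/-- Quantized minimum separation: at a global minimum of a swap-symmetric loss with
weight decay and `q > 1`, distinct neuron weight vectors satisfy
`‖θ₁ − θ₂‖ ≥ (γ/(2K))^{1/(q−1)}`. -/
theorem spaceQuantization_separation {d : ℕ}
    (ℓ₀ : EuclideanSpace ℝ (Fin d) → EuclideanSpace ℝ (Fin d) → ℝ)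
    (hdiff : Differentiable ℝ (fun p : EuclideanSpace ℝ (Fin d) × EuclideanSpace ℝ (Fin d) =>
      ℓ₀ p.1 p.2))
    (hsym : ∀ u w, ℓ₀ u w = ℓ₀ w u)
    (K q : ℝ) (hK : 0 < K) (hq : 1 < q)
    (hgrad : ∀ (v θ : EuclideanSpace ℝ (Fin d)) (z : ℝ),
      |deriv (fun s : ℝ => ℓ₀ (v + s • θ) (v - s • θ)) z| ≤ K * ‖z • θ‖ ^ q * ‖θ‖)
    (γ : ℝ) (hγ : 0 < γ)
    (ℓ : EuclideanSpace ℝ (Fin d) → EuclideanSpace ℝ (Fin d) → ℝ)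
    (hℓ : ∀ u w, ℓ u w = ℓ₀ u w + γ * (‖u‖ ^ 2 + ‖w‖ ^ 2))
    (θ₁ θ₂ : EuclideanSpace ℝ (Fin d)) (hmin : ∀ u w, ℓ θ₁ θ₂ ≤ ℓ u w)
    (hne : θ₁ ≠ θ₂) :
    (γ / (2 * K)) ^ (1 / (q - 1)) ≤ ‖θ₁ - θ₂‖ := by
  set v : EuclideanSpace ℝ (Fin d) := (2:ℝ)⁻¹ • (θ₁ + θ₂) with hv
  set θ : EuclideanSpace ℝ (Fin d) := (2:ℝ)⁻¹ • (θ₁ - θ₂) with hθdef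
  have hθ1 : v + (1:ℝ) • θ = θ₁ := by rw [hv, hθdef]; module
  have hθ2 : v - (1:ℝ) • θ = θ₂ := by rw [hv, hθdef]; module
  have hθne : θ ≠ 0 := by
    rw [hθdef]
    exact smul_ne_zero (by norm_num) (sub_ne_zero.mpr hne)
  set t : ℝ := ‖θ‖ with htdef
  have ht : 0 < t := norm_pos_iff.mpr hθne
  set f : ℝ → ℝ := fun s : ℝ => ℓ₀ (v + s • θ) (v - s • θ) with hfdef
  have hfd : Differentiable ℝ f := by
    have : f = (fun p : EuclideanSpace ℝ (Fin d) × EuclideanSpace ℝ (Fin d) => ℓ₀ p.1 p.2) ∘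
        (fun s : ℝ => (v + s • θ, v - s • θ)) := rfl
    rw [this]
    exact hdiff.comp (by fun_prop)
  obtain ⟨c, hc, hderiv⟩ := exists_deriv_eq_slope f one_pos hfd.continuous.continuousOn
    (fun x _ => (hfd x).differentiableWithinAt)
  have hslope : deriv f c = f 1 - f 0 := by rw [hderiv]; ring
  -- f values
  have hf1 : f 1 = ℓ₀ θ₁ θ₂ := by
    show ℓ₀ (v + (1:ℝ) • θ) (v - (1:ℝ) • θ) = ℓ₀ θ₁ θ₂
    rw [hθ1, hθ2]
  have hf0 : f 0 = ℓ₀ v v := by simp [hfdef]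
  -- parallelogram
  have hpar : ‖θ₁‖^2 + ‖θ₂‖^2 = 2*(‖v‖^2 + ‖θ‖^2) := by
    rw [← hθ1, ← hθ2, one_smul]
    have := parallelogram_law_with_norm ℝ v θ
    nlinarith [this]
  -- minimality
  have hmin' : ℓ θ₁ θ₂ ≤ ℓ v v := hmin v v
  rw [hℓ, hℓ] at hmin'
  have hgap : 2*γ*t^2 ≤ f 0 - f 1 := by
    rw [hf0, hf1]
    nlinarith [hmin', hpar]
  -- gradient bound
  have hb : |deriv f c| ≤ K * ‖c • θ‖ ^ q * ‖θ‖ := hgrad v θ c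
  have hcθ : ‖c • θ‖ ^ q ≤ t ^ q := by
    apply Real.rpow_le_rpow (norm_nonneg _) _ (by linarith)
    rw [norm_smul]
    have h1 : |c| ≤ 1 := by
      rw [abs_of_pos hc.1]; exact le_of_lt hc.2
    calc |c| * t ≤ 1 * t := mul_le_mul_of_nonneg_right h1 ht.le
    _ = t := one_mul t
  have hb2 : |deriv f c| ≤ K * t ^ q * t := by
    calc |deriv f c| ≤ K * ‖c • θ‖ ^ q * ‖θ‖ := hb
    _ ≤ K * t ^ q * t := by
        apply mul_le_mul_of_nonneg_right _ (norm_nonneg _)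
        exact mul_le_mul_of_nonneg_left hcθ hK.le
  have hchain : 2*γ*t^2 ≤ K * t ^ q * t := by
    have : 2*γ*t^2 ≤ |deriv f c| := by
      rw [hslope, abs_sub_comm]
      exact hgap.trans (le_abs_self _)
    linarith
  -- rearrange
  have e1 : t ^ q * t = t ^ (q+1) := (Real.rpow_add_one ht.ne' q).symm
  have e2 : t ^ (q-1) * t^2 = t ^ (q+1) := by
    rw [show (t:ℝ)^2 = t^((2:ℕ):ℝ) from (Real.rpow_natCast t 2).symm,
      ← Real.rpow_add ht]
    congr 1
    push_cast
    ring
  have h2γ : 2*γ ≤ K * t^(q-1) := by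
    have ht2 : (0:ℝ) < t^2 := by positivity
    have : (2*γ) * t^2 ≤ (K * t^(q-1)) * t^2 := by
      calc (2*γ)*t^2 ≤ K * t^q * t := by linarith
      _ = K * t^(q+1) := by rw [mul_assoc, e1]
      _ = (K * t^(q-1)) * t^2 := by rw [mul_assoc, e2]
    exact le_of_mul_le_mul_right this ht2
  have hp : (0:ℝ) ≤ t^(q-1) := Real.rpow_nonneg ht.le _
  have hfin : γ/(2*K) ≤ t^(q-1) := by
    rw [div_le_iff₀ (by positivity)]
    have hr : t^(q-1)*(2*K) = 2*(K*t^(q-1)) := by ring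
    linarith
  have hq0 : (0:ℝ) < q - 1 := by linarith
  have hmono := Real.rpow_le_rpow (by positivity) hfin
    (by positivity : (0:ℝ) ≤ 1/(q-1))
  have hq1 : (q-1) * (1/(q-1)) = 1 := by
    field_simp
  have : (t^(q-1))^(1/(q-1)) = t := by
    rw [← Real.rpow_mul ht.le, hq1, Real.rpow_one]
  rw [this] at hmono
  have hnorm : ‖θ₁ - θ₂‖ = 2*t := by
    have : θ₁ - θ₂ = (2:ℝ) • θ := by rw [hθdef]; module
    rw [this, norm_smul]
    norm_num [htdef]
  rw [hnorm]
  linarith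
end
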